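/- Consider six qubit registers A, B, C, D, E, F in the state |Ψ_init⟩ = |Ψ⁺⟩_{AB} ⊗ |Ψ⁺⟩_{CD} ⊗ |Ψ⁺⟩_{EF}. Then for each measurement outcome a ∈ {0,1}, applying CNOT^{(B,E)}, then CNOT^{(D,E)}, then projecting register E onto |a⟩ and applying σ_X^a to register F, yields the vector (1/√2)·[ (1/2)(|0000⟩_{ABCD} + |1111⟩_{ABCD})|0⟩_F + (1/2)(|0011⟩_{ABCD} + |1100⟩_{ABCD})|1⟩_F ]. In particular, the Connection:Add operation Add^{B,D}_{E→F} on three EPR pairs stores the parity of B and D into F, simulating the classical XOR encoding of network coding. -/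

import Mathlib

open scoped TensorProduct

namespace QNC

noncomputable section

/-- The state space of `n` qubit registers: amplitudes on the computational basis. -/
abbrev QState (n : ℕ) : Type := (Fin n → Bool) → ℂ

/-- Computational basis state `|x⟩`. -/
def ket {n : ℕ} (x : Fin n → Bool) : QState n := fun y => if y = x then 1 else 0

/-- The CNOT gate with control register `c` and target register `t`. -/
def CNOTgate {n : ℕ} (c t : Fin n) : QState n →ₗ[ℂ] QState n where
  toFun ψ := fun x => ψ (Function.update x t (xor (x c) (x t)))
  map_add' _ _ := rfl
  map_smul' _ _ := rfl

/-- The Pauli `σ_X` gate on register `i`. -/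
def Xgate {n : ℕ} (i : Fin n) : QState n →ₗ[ℂ] QState n where
  toFun ψ := fun x => ψ (Function.update x i (!(x i)))
  map_add' _ _ := rfl
  map_smul' _ _ := rfl

/-- The Pauli `σ_Z` gate on register `i`. -/
def Zgate {n : ℕ} (i : Fin n) : QState n →ₗ[ℂ] QState n where
  toFun ψ := fun x => if x i then -ψ x else ψ x
  map_add' ψ φ := by funext x; by_cases h : x i <;> simp [h, neg_add] <;> ring
  map_smul' c ψ := by funext x; by_cases h : x i <;> simp [h]

/-- The Hadamard gate on register `i`. -/
def Hgate {n : ℕ} (i : Fin n) : QState n →ₗ[ℂ] QState n where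
  toFun ψ := fun x => (Real.sqrt 2 : ℂ)⁻¹ *
      (ψ (Function.update x i false) + (if x i then -1 else 1) * ψ (Function.update x i true))
  map_add' ψ φ := by funext x; simp only [Pi.add_apply]; ring
  map_smul' c ψ := by
    funext x; simp only [Pi.smul_apply, smul_eq_mul, RingHom.id_apply]; ring

/-- The computational-basis measurement map `|a⟩⟨a|_i ⊗ I` for outcome `a` on register `i`
(the measured register is kept, left in the basis state `|a⟩`, and can be disregarded). -/
def proj {n : ℕ} (i : Fin n) (a : Bool) : QState n →ₗ[ℂ] QState n where
  toFun ψ := fun x => if x i = a then ψ x else 0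
  map_add' ψ φ := by funext x; by_cases h : x i = a <;> simp [h]
  map_smul' c ψ := by funext x; by_cases h : x i = a <;> simp [h]

/-- `σ_X^a` on register `i`. -/
def Xpow {n : ℕ} (a : Bool) (i : Fin n) : QState n →ₗ[ℂ] QState n :=
  if a then Xgate i else LinearMap.id

/-- `σ_Z^a` on register `i`. -/
def Zpow {n : ℕ} (a : Bool) (i : Fin n) : QState n →ₗ[ℂ] QState n :=
  if a then Zgate i else LinearMap.id

/-- The Connection operation `Con^c_{r→t}` with measurement outcome `a`:
apply `CNOT^{(c,r)}`, project register `r` onto `|a⟩`, apply `σ_X^a` to register `t`. -/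
def Con {n : ℕ} (c r t : Fin n) (a : Bool) : QState n →ₗ[ℂ] QState n :=
  Xpow a t ∘ₗ proj r a ∘ₗ CNOTgate c r

/-- The Connection:Add operation `Add^{c₁,c₂}_{r→t}` with measurement outcome `a`:
apply `CNOT^{(c₁,r)}`, then `CNOT^{(c₂,r)}`, project `r` onto `|a⟩`, apply `σ_X^a` to `t`. -/
def AddOp {n : ℕ} (c₁ c₂ r t : Fin n) (a : Bool) : QState n →ₗ[ℂ] QState n :=
  Con c₂ r t a ∘ₗ CNOTgate c₁ r

/-- The Connection:Fanout operation `Fanout^c_{r₁→t₁, r₂→t₂}` with outcomes `a₁, a₂`. -/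
def Fanout {n : ℕ} (c r₁ t₁ r₂ t₂ : Fin n) (a₁ a₂ : Bool) : QState n →ₗ[ℂ] QState n :=
  Con c r₂ t₂ a₂ ∘ₗ Con c r₁ t₁ a₁

/-- The Removal operation `Rem_{r→t}` with measurement outcome `a`:
apply `H` to `r`, project `r` onto `|a⟩`, apply `σ_Z^a` to `t`. -/
def Rem {n : ℕ} (r t : Fin n) (a : Bool) : QState n →ₗ[ℂ] QState n :=
  Zpow a t ∘ₗ proj r a ∘ₗ Hgate r

/-- The Removal:Add operation `RemAdd_{r→t₁,t₂}` with measurement outcome `a`: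
apply `H` to `r`, project `r` onto `|a⟩`, apply `σ_Z^a` to both `t₁` and `t₂`. -/
def RemAdd {n : ℕ} (r t₁ t₂ : Fin n) (a : Bool) : QState n →ₗ[ℂ] QState n :=
  Zpow a t₂ ∘ₗ Zpow a t₁ ∘ₗ proj r a ∘ₗ Hgate r



lemma cnot_invol {n : ℕ} {c t : Fin n} (h : c ≠ t) (x : Fin n → Bool) :
    Function.update (Function.update x t (xor (x c) (x t))) t
      (xor ((Function.update x t (xor (x c) (x t))) c)
        ((Function.update x t (xor (x c) (x t))) t)) = x := by
  funext i
  by_cases hi : i = t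
  · subst hi
    simp only [Function.update_self, Function.update_of_ne h]
    cases x c <;> cases x i <;> rfl
  · simp [Function.update_of_ne hi]

lemma CNOT_ket {n : ℕ} {c t : Fin n} (h : c ≠ t) (y : Fin n → Bool) :
    CNOTgate c t (ket y) = ket (Function.update y t (xor (y c) (y t))) := by
  funext x
  show (if Function.update x t (xor (x c) (x t)) = y then (1:ℂ) else 0)
      = if x = Function.update y t (xor (y c) (y t)) then 1 else 0
  congr 1
  apply propext
  constructor
  · rintro rfl; exact (cnot_invol h x).symm
  · rintro rfl; exact cnot_invol h y

lemma X_invol {n : ℕ} (i : Fin n) (x : Fin n → Bool) :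
    Function.update (Function.update x i (!(x i))) i
      (!((Function.update x i (!(x i))) i)) = x := by
  funext j
  by_cases hj : j = i
  · subst hj; simp
  · simp [Function.update_of_ne hj]

lemma X_ket {n : ℕ} (i : Fin n) (y : Fin n → Bool) :
    Xgate i (ket y) = ket (Function.update y i (!(y i))) := by
  funext x
  show (if Function.update x i (!(x i)) = y then (1:ℂ) else 0)
      = if x = Function.update y i (!(y i)) then 1 else 0
  congr 1
  apply propext
  constructor
  · rintro rfl; exact (X_invol i x).symm
  · rintro rfl; exact X_invol i y

lemma proj_ket {n : ℕ} (i : Fin n) (a : Bool) (y : Fin n → Bool) :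
    proj i a (ket y) = if y i = a then ket y else 0 := by
  funext x
  show (if x i = a then (if x = y then (1:ℂ) else 0) else 0) = _
  by_cases hxy : x = y
  · subst hxy; by_cases h : x i = a <;> simp [h, ket]
  · by_cases h : y i = a <;> by_cases h2 : x i = a <;> simp [h, h2, hxy, ket]

lemma upd6 (v0 v1 v2 v3 v4 v5 w : Bool) (j : Fin 6) :
    Function.update ![v0,v1,v2,v3,v4,v5] j w =
      ![if j = 0 then w else v0, if j = 1 then w else v1, if j = 2 then w else v2,
        if j = 3 then w else v3, if j = 4 then w else v4, if j = 5 then w else v5] := by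
  funext i
  fin_cases i <;> fin_cases j <;> rfl


lemma vec6_0 (v0 v1 v2 v3 v4 v5 : Bool) : (![v0,v1,v2,v3,v4,v5] : Fin 6 → Bool) 0 = v0 := rfl
lemma vec6_1 (v0 v1 v2 v3 v4 v5 : Bool) : (![v0,v1,v2,v3,v4,v5] : Fin 6 → Bool) 1 = v1 := rfl
lemma vec6_2 (v0 v1 v2 v3 v4 v5 : Bool) : (![v0,v1,v2,v3,v4,v5] : Fin 6 → Bool) 2 = v2 := rfl
lemma vec6_3 (v0 v1 v2 v3 v4 v5 : Bool) : (![v0,v1,v2,v3,v4,v5] : Fin 6 → Bool) 3 = v3 := rfl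
lemma vec6_4 (v0 v1 v2 v3 v4 v5 : Bool) : (![v0,v1,v2,v3,v4,v5] : Fin 6 → Bool) 4 = v4 := rfl
lemma vec6_5 (v0 v1 v2 v3 v4 v5 : Bool) : (![v0,v1,v2,v3,v4,v5] : Fin 6 → Bool) 5 = v5 := rfl

lemma addop_ket (b d f a : Bool) :
    AddOp (1 : Fin 6) 3 4 5 a (ket ![b, b, d, d, f, f])
      = if xor d (xor b f) = a then ket ![b, b, d, d, a, xor a f] else 0 := by
  have h14 : (1 : Fin 6) ≠ 4 := by decide
  have h34 : (3 : Fin 6) ≠ 4 := by decide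
  have u1 : Function.update ![b, b, d, d, f, f] (4 : Fin 6)
      (xor (![b, b, d, d, f, f] 1) (![b, b, d, d, f, f] 4)) = ![b, b, d, d, xor b f, f] := by
    funext i; fin_cases i <;> rfl
  have e1 : CNOTgate 1 4 (ket ![b, b, d, d, f, f]) = ket ![b, b, d, d, xor b f, f] :=
    (CNOT_ket h14 _).trans (congrArg ket u1)
  have u2 : Function.update ![b, b, d, d, xor b f, f] (4 : Fin 6)
      (xor (![b, b, d, d, xor b f, f] 3) (![b, b, d, d, xor b f, f] 4))
      = ![b, b, d, d, xor d (xor b f), f] := by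
    funext i; fin_cases i <;> rfl
  have e2 : CNOTgate 3 4 (ket ![b, b, d, d, xor b f, f])
      = ket ![b, b, d, d, xor d (xor b f), f] :=
    (CNOT_ket h34 _).trans (congrArg ket u2)
  simp only [AddOp, Con, LinearMap.comp_apply, e1, e2, proj_ket, vec6_4]
  by_cases h : xor d (xor b f) = a
  · rw [if_pos h]; erw [if_pos h]; rw [h]
    cases a
    · simp [Xpow]
    · have u3 : Function.update ![b, b, d, d, true, f] (5 : Fin 6)
          (!(![b, b, d, d, true, f] 5)) = ![b, b, d, d, true, !f] := by
        funext i; fin_cases i <;> rfl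
      simp only [Xpow, if_true, Bool.true_xor]
      exact (X_ket 5 _).trans (congrArg ket u3)
  · rw [if_neg h]; erw [if_neg h]; rw [map_zero]

set_option maxHeartbeats 1600000 in
/-- **Connection:Add on three EPR pairs simulates the classical XOR encoding.**
Registers `A, B, C, D, E, F` are `0,…,5`. Applying `Add^{B,D}_{E→F}` with outcome `a` to
`|Ψ⁺⟩_{AB} ⊗ |Ψ⁺⟩_{CD} ⊗ |Ψ⁺⟩_{EF}` yields
`(1/√2)[(1/2)(|0000⟩_{ABCD} + |1111⟩_{ABCD})|0⟩_F + (1/2)(|0011⟩_{ABCD} + |1100⟩_{ABCD})|1⟩_F]`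
(with the measured register `E` left in `|a⟩`, to be disregarded). -/
theorem add_butterfly (a : Bool) :
    AddOp (1 : Fin 6) 3 4 5 a
      (((Real.sqrt 2 : ℂ)⁻¹) ^ 3 •
        ∑ b : Bool, ∑ d : Bool, ∑ f : Bool, ket ![b, b, d, d, f, f])
    = ((Real.sqrt 2 : ℂ)⁻¹) ^ 3 •
        (ket ![false, false, false, false, a, false] + ket ![true, true, true, true, a, false]
          + ket ![false, false, true, true, a, true]
          + ket ![true, true, false, false, a, true]) := by
  rw [map_smul]
  congr 1
  simp only [Fintype.sum_bool, map_add, addop_ket]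
  cases a <;> simp <;> abel

end

end QNC
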